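/- Let χ be a bicharacter on ℤ^I with values in 𝕜∖{0}, p ∈ I with χ p-finite, and i ∈ I∖{p}; write c_{pi} = c^χ_{pi}. Then λ_i(r_p(χ)) = (q_pp^{−c_{pi}} q_{pi} q_{ip})^{c_{pi}} · λ_i(χ) and λ_i(χ^{−1}) = (−q_pp^{−c_{pi}−1} q_{pi} q_{ip})^{c_{pi}} · λ_i(χ), where the integer powers with negative exponent c_{pi} are taken in 𝕜∖{0}. -/

import Mathlib

/-- The quantum integer `[n]_q = 1 + q + ⋯ + q^{n-1}` for `n ∈ ℕ`. -/
def qNat {𝕜 : Type*} [Field 𝕜] (q : 𝕜) (n : ℕ) : 𝕜 :=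
  ∑ i ∈ Finset.range n, q ^ i

/-- The quantum factorial `[n]_q! = [1]_q [2]_q ⋯ [n]_q`. -/
def qFact {𝕜 : Type*} [Field 𝕜] (q : 𝕜) (n : ℕ) : 𝕜 :=
  ∏ i ∈ Finset.range n, qNat q (i + 1)

variable {𝕜 : Type*} [Field 𝕜] {I : Type*} [Fintype I] [DecidableEq I]

/-- The standard basis vector `ε_i` of `ℤ^I`. -/
def eps (i : I) : I → ℤ := Pi.single i 1

/-- `χ : ℤ^I × ℤ^I → 𝕜∖{0}` is a bicharacter. -/
def IsBichar (χ : (I → ℤ) → (I → ℤ) → 𝕜) : Prop :=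
  (∀ a b c : I → ℤ, χ (a + b) c = χ a c * χ b c) ∧
  (∀ c a b : I → ℤ, χ c (a + b) = χ c a * χ c b) ∧
  (∀ a b : I → ℤ, χ a b ≠ 0)

/-- `χ` is `p`-finite: for every `j ≠ p` there is `m ∈ ℕ₀` with
`[m+1]_{q_{pp}} = 0` or `q_{pp}^m q_{pj} q_{jp} = 1`. -/
def IsPFinite (χ : (I → ℤ) → (I → ℤ) → 𝕜) (p : I) : Prop :=
  ∀ j, j ≠ p → ∃ m : ℕ,
    qNat (χ (eps p) (eps p)) (m + 1) = 0 ∨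
    χ (eps p) (eps p) ^ m * χ (eps p) (eps j) * χ (eps j) (eps p) = 1

open Classical in
/-- The Cartan integers `c^χ_{pj}` of a (`p`-finite) bicharacter `χ`. -/
noncomputable def cartan (χ : (I → ℤ) → (I → ℤ) → 𝕜) (p j : I) : ℤ :=
  if p = j then 2
  else if h : ∃ m : ℕ,
      qNat (χ (eps p) (eps p)) (m + 1) = 0 ∨
      χ (eps p) (eps p) ^ m * χ (eps p) (eps j) * χ (eps j) (eps p) = 1
    then -(Nat.find h) else 0

/-- The reflection `σ_p^χ ∈ Aut(ℤ^I)`, `σ_p^χ(ε_j) = ε_j − c^χ_{pj} ε_p`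
(an involution, so equal to its own inverse). -/
noncomputable def sigmaChi (χ : (I → ℤ) → (I → ℤ) → 𝕜) (p : I) (a : I → ℤ) : I → ℤ :=
  a - (∑ j, cartan χ p j * a j) • eps p

/-- `r_p(χ) = (σ_p^χ)^*χ`, i.e. `r_p(χ)(a,b) = χ((σ_p^χ)⁻¹ a, (σ_p^χ)⁻¹ b)`. -/
noncomputable def rp (χ : (I → ℤ) → (I → ℤ) → 𝕜) (p : I) :
    (I → ℤ) → (I → ℤ) → 𝕜 :=
  fun a b => χ (sigmaChi χ p a) (sigmaChi χ p b)

/-- `λ_i(χ) = [−c^χ_{pi}]_{q_{pp}}! ⬝ ∏_{s=0}^{−c^χ_{pi}−1} (q_{pp}^s q_{pi} q_{ip} − 1)`. -/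
noncomputable def lam (χ : (I → ℤ) → (I → ℤ) → 𝕜) (p i : I) : 𝕜 :=
  qFact (χ (eps p) (eps p)) (-(cartan χ p i)).toNat *
    ∏ s ∈ Finset.range (-(cartan χ p i)).toNat,
      (χ (eps p) (eps p) ^ s * χ (eps p) (eps i) * χ (eps i) (eps p) - 1)

section AuxLemmas
set_option linter.unusedSectionVars false
variable {𝕜 : Type*} [Field 𝕜]

lemma pow_eq_one_of_qNat {q : 𝕜} {n : ℕ} (h : qNat q n = 0) : q ^ n = 1 := by
  have := geom_sum_mul q n
  rw [show (∑ i ∈ Finset.range n, q ^ i) = qNat q n from rfl, h, zero_mul] at this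
  linear_combination -this

lemma qNat_add (q : 𝕜) (a b : ℕ) : qNat q (a + b) = qNat q a + q ^ a * qNat q b := by
  simp [qNat, Finset.sum_range_add, pow_add, Finset.mul_sum]

lemma qNat_inv (q : 𝕜) (hq : q ≠ 0) (n : ℕ) :
    qNat q⁻¹ (n + 1) * q ^ n = qNat q (n + 1) := by
  rw [qNat, qNat, Finset.sum_mul, ← Finset.sum_range_reflect (fun i => q ^ i) (n + 1)]
  refine Finset.sum_congr rfl fun i hi => ?_
  have hi' : i ≤ n := by simpa [Nat.lt_succ] using hi
  have : (q ^ i)⁻¹ * q ^ n = q ^ (n - i) := by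
    rw [eq_comm, eq_comm, inv_mul_eq_iff_eq_mul₀ (pow_ne_zero _ hq), ← pow_add]
    congr 1
    omega
  simpa [inv_pow] using this

lemma qFact_inv (q : 𝕜) (hq : q ≠ 0) (m : ℕ) :
    qFact q⁻¹ m * q ^ (∑ i ∈ Finset.range m, i) = qFact q m := by
  rw [qFact, qFact, ← Finset.prod_pow_eq_pow_sum, ← Finset.prod_mul_distrib]
  exact Finset.prod_congr rfl fun i _ => qNat_inv q hq i

lemma lam_inv_calc (q A B : 𝕜) (hq : q ≠ 0) (hA : A ≠ 0) (hB : B ≠ 0) (m : ℕ) :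
    qFact q⁻¹ m * ∏ s ∈ Finset.range m, ((q⁻¹) ^ s * A⁻¹ * B⁻¹ - 1) =
    ((-(q ^ m * q⁻¹ * A * B)) ^ m)⁻¹ *
      (qFact q m * ∏ s ∈ Finset.range m, (q ^ s * A * B - 1)) := by
  rcases Nat.eq_zero_or_pos m with rfl | hm
  · simp [qFact]
  obtain ⟨n, rfl⟩ : ∃ n, m = n + 1 := ⟨m - 1, by omega⟩
  set T := ∑ i ∈ Finset.range (n + 1), i with hT
  have hT2 : T * 2 = (n + 1) * n := by
    simpa using Finset.sum_range_id_mul_two (n + 1)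
  have hqn : q ^ (n + 1) * q⁻¹ = q ^ n := by
    field_simp [pow_succ]
    ring
  have hF : qFact q⁻¹ (n + 1) = qFact q (n + 1) * (q ^ T)⁻¹ := by
    rw [← qFact_inv q hq (n + 1), ← hT]
    field_simp
  have hprod : (∏ s ∈ Finset.range (n + 1), ((q⁻¹) ^ s * A⁻¹ * B⁻¹ - 1)) =
      (-1) ^ (n + 1) * (q ^ T)⁻¹ * (A⁻¹ * B⁻¹) ^ (n + 1) *
        ∏ s ∈ Finset.range (n + 1), (q ^ s * A * B - 1) := by
    have : ∀ s ∈ Finset.range (n + 1), (q⁻¹) ^ s * A⁻¹ * B⁻¹ - 1 =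
        ((-1) * ((q⁻¹) ^ s * (A⁻¹ * B⁻¹))) * (q ^ s * A * B - 1) := by
      intro s _
      have h1 : (q⁻¹) ^ s * q ^ s = 1 := by
        rw [inv_pow, inv_mul_cancel₀ (pow_ne_zero _ hq)]
      have h2 : A⁻¹ * A = 1 := inv_mul_cancel₀ hA
      have h3 : B⁻¹ * B = 1 := inv_mul_cancel₀ hB
      linear_combination (A⁻¹ * A * (B⁻¹ * B)) * h1 + (B⁻¹ * B) * h2 + h3
    rw [Finset.prod_congr rfl this, Finset.prod_mul_distrib, Finset.prod_mul_distrib,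
      Finset.prod_mul_distrib, Finset.prod_const, Finset.prod_const,
      Finset.prod_pow_eq_pow_sum, ← hT, inv_pow]
    simp only [Finset.card_range]
    ring
  rw [hF, hprod, hqn]
  have hpow : q ^ T * q ^ T = (q ^ n) ^ (n + 1) := by
    rw [← pow_add, ← pow_mul]
    congr 1
    calc T + T = T * 2 := by ring
    _ = (n + 1) * n := hT2
    _ = n * (n + 1) := by ring
  have h1 : ((-(q ^ n * A * B)) ^ (n + 1))⁻¹ =
      ((-1) ^ (n + 1) * (q ^ n) ^ (n + 1) * A ^ (n + 1) * B ^ (n + 1))⁻¹ := by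
    congr 1
    ring
  rw [h1, ← hpow]
  set P := ∏ s ∈ Finset.range (n + 1), (q ^ s * A * B - 1) with hP
  set F := qFact q (n + 1) with hFd
  set u := q ^ T with hu'
  have hu : u ≠ 0 := pow_ne_zero _ hq
  set e := (-1 : 𝕜) ^ (n + 1) with he
  have hee : e * e = 1 := by
    rw [he, ← pow_add, ← two_mul, pow_mul]
    norm_num
  have he0 : e ≠ 0 := by
    rw [he]; exact pow_ne_zero _ (by norm_num)
  have hAB : (A⁻¹ * B⁻¹) ^ (n + 1) = (A ^ (n + 1))⁻¹ * (B ^ (n + 1))⁻¹ := by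
    rw [mul_pow, inv_pow, inv_pow]
  rw [hAB]
  have hAn : A ^ (n + 1) ≠ 0 := pow_ne_zero _ hA
  have hBn : B ^ (n + 1) ≠ 0 := pow_ne_zero _ hB
  rw [eq_comm, inv_mul_eq_iff_eq_mul₀
    (mul_ne_zero (mul_ne_zero (mul_ne_zero he0 (mul_ne_zero hu hu)) hAn) hBn)]
  field_simp
  linear_combination (-(F * P)) * hee

lemma lam_rp_calc1 (q A B : 𝕜) (hq : q ≠ 0) (hA : A ≠ 0) (hB : B ≠ 0) (m : ℕ)
    (h1 : q ^ m * A * B = 1) :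
    qFact q m * ∏ s ∈ Finset.range m, (q ^ s * (A * q ^ m)⁻¹ * (B * q ^ m)⁻¹ - 1) =
    ((q ^ m * A * B) ^ m)⁻¹ *
      (qFact q m * ∏ s ∈ Finset.range m, (q ^ s * A * B - 1)) := by
  have hc : (q ^ m * A * B) ^ m = 1 := by rw [h1, one_pow]
  rw [hc, inv_one, one_mul]
  congr 1
  refine Finset.prod_congr rfl fun s _ => ?_
  have key : (A * q ^ m)⁻¹ * (B * q ^ m)⁻¹ = A * B := by
    have h2 : (q ^ m * A * B) * (q ^ m * A * B) = 1 := by rw [h1]; norm_num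
    field_simp
    linear_combination -h2
  rw [mul_assoc, key, mul_assoc]

lemma lam_rp_calc2 (q A B : 𝕜) (hq : q ≠ 0) (hA : A ≠ 0) (hB : B ≠ 0) (m : ℕ)
    (h0 : qNat q (m + 1) = 0) (hmin : ∀ k, k < m → qNat q (k + 1) ≠ 0) :
    qFact q m * ∏ s ∈ Finset.range m, (q ^ s * (A * q ^ m)⁻¹ * (B * q ^ m)⁻¹ - 1) =
    ((q ^ m * A * B) ^ m)⁻¹ *
      (qFact q m * ∏ s ∈ Finset.range m, (q ^ s * A * B - 1)) := by
  have E : q ^ (m + 1) = 1 := pow_eq_one_of_qNat h0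
  set T := ∑ i ∈ Finset.range m, i with hT
  have hT2 : T * 2 = m * (m - 1) := Finset.sum_range_id_mul_two m
  have hT2' : T * 2 + m = m * m := by
    rcases Nat.eq_zero_or_pos m with rfl | hm
    · simp [hT]
    · have h1 : m * (m - 1) + m = m * m := by
        cases m with
        | zero => omega
        | succ n => simp only [Nat.succ_sub_one]; ring
      linarith [hT2, h1]
  have key : (-1 : 𝕜) ^ m * q ^ (T + 2 * m + m * m) = 1 := by
    rcases Nat.even_or_odd m with ⟨j, hj⟩ | ⟨j, hj⟩
    · have hN : T + 2 * m + m * m = (m + 1) * (3 * j) := by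
        refine Nat.eq_of_mul_eq_mul_left (show 0 < 2 by norm_num) ?_
        subst hj
        ring_nf
        ring_nf at hT2'
        linarith [hT2']
      rw [hN, pow_mul, E, one_pow, Even.neg_one_pow ⟨j, hj⟩, one_mul]
    · have hN : T + 2 * m + m * m = (j + 1) * (3 * m) := by
        refine Nat.eq_of_mul_eq_mul_left (show 0 < 2 by norm_num) ?_
        subst hj
        ring_nf
        ring_nf at hT2'
        linarith [hT2']
      set u := q ^ (j + 1) with hu
      have hu2 : u * u = 1 := by
        rw [hu, ← pow_add]
        have : j + 1 + (j + 1) = m + 1 := by omega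
        rw [this, E]
      have hcases : (u - 1) * (u + 1) = 0 := by linear_combination hu2
      rw [hN, pow_mul, ← hu]
      rcases mul_eq_zero.mp hcases with h | h
      · -- u = 1 : char 2 case
        have hu1 : u = 1 := by linear_combination h
        have hsplit : qNat q (m + 1) = qNat q (j + 1) + q ^ (j + 1) * qNat q (j + 1) := by
          have : m + 1 = (j + 1) + (j + 1) := by omega
          rw [this, qNat_add]
        rw [← hu, hu1, one_mul, h0] at hsplit
        have h2 : (2 : 𝕜) = 0 := by
          have hne : qNat q (j + 1) ≠ 0 := hmin j (by omega)
          have : (2 : 𝕜) * qNat q (j + 1) = 0 := by linear_combination -hsplit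
          rcases mul_eq_zero.mp this with h' | h'
          · exact h'
          · exact absurd h' hne
        have hneg : (-1 : 𝕜) = 1 := by linear_combination -h2
        rw [hneg, hu1, one_pow, one_pow, one_mul]
      · have hun : u = -1 := by linear_combination h
        rw [hun, ← pow_add]
        have : m + 3 * m = 2 * (2 * m) := by ring
        rw [this, pow_mul]
        norm_num
  -- termwise rewriting of the product
  have hterm : ∀ s ∈ Finset.range m, q ^ s * (A * q ^ m)⁻¹ * (B * q ^ m)⁻¹ - 1 =
      ((-1) * (q ^ s * (q ^ 2 * A⁻¹ * B⁻¹))) * (q ^ (m - 1 - s) * A * B - 1) := by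
    intro s hs
    have hsm : s < m := Finset.mem_range.mp hs
    have e2 : q ^ (s + 2) * (q ^ m * q ^ m) = q ^ s := by
      have : q ^ (s + 2) * (q ^ m * q ^ m) = q ^ s * (q ^ (m + 1) * q ^ (m + 1)) := by
        ring
      rw [this, E]; ring
    have f2 : q ^ (s + 2) * q ^ (m - 1 - s) = 1 := by
      rw [← pow_add]
      have : s + 2 + (m - 1 - s) = m + 1 := by omega
      rw [this, E]
    have eLHS : q ^ s * (A * q ^ m)⁻¹ * (B * q ^ m)⁻¹ = q ^ (s + 2) * A⁻¹ * B⁻¹ := by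
      field_simp
      linear_combination -e2
    rw [eLHS]
    have h2 : A⁻¹ * A = 1 := inv_mul_cancel₀ hA
    have h3 : B⁻¹ * B = 1 := inv_mul_cancel₀ hB
    have f1 : q ^ s * q ^ 2 = q ^ (s + 2) := (pow_add q s 2).symm
    linear_combination (A⁻¹ * A * (B⁻¹ * B) * q ^ (m - 1 - s)) * f1 +
      (A⁻¹ * A * (B⁻¹ * B)) * f2 + (B⁻¹ * B) * h2 + h3
  rw [Finset.prod_congr rfl hterm, Finset.prod_mul_distrib, Finset.prod_mul_distrib,
    Finset.prod_mul_distrib, Finset.prod_const, Finset.prod_const,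
    Finset.prod_pow_eq_pow_sum, ← hT,
    Finset.prod_range_reflect (fun s => q ^ s * A * B - 1) m,
    Finset.card_range]
  have hc : (q ^ m * A * B) ^ m ≠ 0 :=
    pow_ne_zero _ (mul_ne_zero (mul_ne_zero (pow_ne_zero _ hq) hA) hB)
  rw [eq_comm, inv_mul_eq_iff_eq_mul₀ hc]
  field_simp
  have hprod' : ∏ x ∈ Finset.range m, (A * B * q ^ x - 1) =
      ∏ x ∈ Finset.range m, (q ^ x * A * B - 1) :=
    Finset.prod_congr rfl fun x _ => by ring
  have hAB' : (A * B * q ^ m) ^ m * (q ^ 2 / (A * B)) ^ m = (q ^ m * q ^ 2) ^ m := by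
    rw [← mul_pow]; congr 1; field_simp
  rw [hprod']
  linear_combination
    (-(qFact q m * (∏ s ∈ Finset.range m, (q ^ s * A * B - 1)))) * key -
    (qFact q m * (-1) ^ m * q ^ T * (∏ s ∈ Finset.range m, (q ^ s * A * B - 1))) * hAB'

end AuxLemmas

section AuxLemmas2
set_option linter.unusedSectionVars false
variable {𝕜 : Type*} [Field 𝕜] {I : Type*} [Fintype I] [DecidableEq I]

section Bichar
variable {χ : (I → ℤ) → (I → ℤ) → 𝕜} (hχ : IsBichar χ)
include hχ

lemma chi_zero_left (b : I → ℤ) : χ 0 b = 1 := by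
  have h := hχ.1 0 0 b
  rw [add_zero] at h
  have := hχ.2.2 0 b
  field_simp at h
  exact h.symm

lemma chi_zero_right (a : I → ℤ) : χ a 0 = 1 := by
  have h := hχ.2.1 a 0 0
  rw [add_zero] at h
  have := hχ.2.2 a 0
  field_simp at h
  exact h.symm

lemma chi_neg_left (a b : I → ℤ) : χ (-a) b = (χ a b)⁻¹ := by
  have h := hχ.1 a (-a) b
  rw [add_neg_cancel, chi_zero_left hχ] at h
  have h2 := hχ.2.2 a b
  field_simp
  linear_combination -h

lemma chi_neg_right (a b : I → ℤ) : χ a (-b) = (χ a b)⁻¹ := by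
  have h := hχ.2.1 a b (-b)
  rw [add_neg_cancel, chi_zero_right hχ] at h
  have h2 := hχ.2.2 a b
  field_simp
  linear_combination -h

lemma chi_nsmul_left (n : ℕ) (a b : I → ℤ) : χ (n • a) b = χ a b ^ n := by
  induction n with
  | zero => simpa using chi_zero_left hχ b
  | succ k ih => rw [succ_nsmul, hχ.1, ih, pow_succ]

lemma chi_nsmul_right (n : ℕ) (a b : I → ℤ) : χ a (n • b) = χ a b ^ n := by
  induction n with
  | zero => simpa using chi_zero_right hχ a
  | succ k ih => rw [succ_nsmul, hχ.2.1, ih, pow_succ]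

end Bichar

lemma cartan_self (χ : (I → ℤ) → (I → ℤ) → 𝕜) (p : I) : cartan χ p p = 2 := by
  rw [cartan, if_pos rfl]

lemma cartan_eq_of {χ : (I → ℤ) → (I → ℤ) → 𝕜} {p i : I} (hpi : p ≠ i) {m : ℕ}
    (hm : qNat (χ (eps p) (eps p)) (m + 1) = 0 ∨
      χ (eps p) (eps p) ^ m * χ (eps p) (eps i) * χ (eps i) (eps p) = 1)
    (hmin : ∀ k, k < m → ¬(qNat (χ (eps p) (eps p)) (k + 1) = 0 ∨
      χ (eps p) (eps p) ^ k * χ (eps p) (eps i) * χ (eps i) (eps p) = 1)) :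
    cartan χ p i = -(m : ℤ) := by
  classical
  have h : ∃ m : ℕ, qNat (χ (eps p) (eps p)) (m + 1) = 0 ∨
      χ (eps p) (eps p) ^ m * χ (eps p) (eps i) * χ (eps i) (eps p) = 1 := ⟨m, hm⟩
  rw [cartan, if_neg hpi, dif_pos h]
  norm_num
  exact (Nat.find_eq_iff h).mpr ⟨hm, hmin⟩

lemma sigma_eps_self (χ : (I → ℤ) → (I → ℤ) → 𝕜) (p : I) :
    sigmaChi χ p (eps p) = -(eps p) := by
  rw [sigmaChi]
  have : (∑ j, cartan χ p j * eps p j) = 2 := by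
    rw [Finset.sum_eq_single p]
    · simp [eps, cartan_self]
    · intro b _ hb
      simp [eps, Pi.single_apply, hb]
    · simp
  rw [this]
  ext j
  simp [eps, Pi.single_apply]
  split <;> ring

lemma sigma_eps_ne (χ : (I → ℤ) → (I → ℤ) → 𝕜) {p i : I} (hpi : p ≠ i) {m : ℕ}
    (hc : cartan χ p i = -(m : ℤ)) :
    sigmaChi χ p (eps i) = eps i + m • eps p := by
  rw [sigmaChi]
  have : (∑ j, cartan χ p j * eps i j) = -(m : ℤ) := by
    rw [Finset.sum_eq_single i]
    · simp [eps, hc]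
    · intro b _ hb
      simp [eps, Pi.single_apply, hb]
    · simp
  rw [this, neg_smul, sub_neg_eq_add, natCast_zsmul]

end AuxLemmas2

/-- Lemma (le:lambda): for a `p`-finite bicharacter `χ` and `i ≠ p`, with
`c_{pi} = c^χ_{pi}`:
`λ_i(r_p(χ)) = (q_{pp}^{−c_{pi}} q_{pi} q_{ip})^{c_{pi}} λ_i(χ)` and
`λ_i(χ⁻¹) = (−q_{pp}^{−c_{pi}−1} q_{pi} q_{ip})^{c_{pi}} λ_i(χ)`. -/
theorem lam_rp_and_inv (χ : (I → ℤ) → (I → ℤ) → 𝕜)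
    (hχ : IsBichar χ) (p : I) (hp : IsPFinite χ p) (i : I) (hip : i ≠ p) :
    lam (rp χ p) p i =
      (χ (eps p) (eps p) ^ (-(cartan χ p i)) * χ (eps p) (eps i) * χ (eps i) (eps p))
        ^ (cartan χ p i) * lam χ p i ∧
    lam (fun a b => (χ a b)⁻¹) p i =
      (-(χ (eps p) (eps p) ^ (-(cartan χ p i) - 1) * χ (eps p) (eps i) * χ (eps i) (eps p)))
        ^ (cartan χ p i) * lam χ p i := by
  classical
  have hq0 : χ (eps p) (eps p) ≠ 0 := hχ.2.2 _ _
  have hA0 : χ (eps p) (eps i) ≠ 0 := hχ.2.2 _ _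
  have hB0 : χ (eps i) (eps p) ≠ 0 := hχ.2.2 _ _
  have hex : ∃ m : ℕ, qNat (χ (eps p) (eps p)) (m + 1) = 0 ∨
      χ (eps p) (eps p) ^ m * χ (eps p) (eps i) * χ (eps i) (eps p) = 1 := hp i hip
  set m := Nat.find hex with hmdef
  have hm := Nat.find_spec hex
  rw [← hmdef] at hm
  have hmin : ∀ k, k < m → ¬(qNat (χ (eps p) (eps p)) (k + 1) = 0 ∨
      χ (eps p) (eps p) ^ k * χ (eps p) (eps i) * χ (eps i) (eps p) = 1) :=
    fun k hk => Nat.find_min hex hk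
  have hc : cartan χ p i = -(m : ℤ) := cartan_eq_of (Ne.symm hip) hm hmin
  have htoNat : (-(cartan χ p i)).toNat = m := by rw [hc]; simp
  have hσi : sigmaChi χ p (eps i) = eps i + m • eps p := sigma_eps_ne χ (Ne.symm hip) hc
  have hσp : sigmaChi χ p (eps p) = -(eps p) := sigma_eps_self χ p
  -- values of rp
  have hrpp : rp χ p (eps p) (eps p) = χ (eps p) (eps p) := by
    show χ (sigmaChi χ p (eps p)) (sigmaChi χ p (eps p)) = _
    rw [hσp, chi_neg_left hχ, chi_neg_right hχ, inv_inv]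
  have hrpi : rp χ p (eps p) (eps i) =
      (χ (eps p) (eps i) * χ (eps p) (eps p) ^ m)⁻¹ := by
    show χ (sigmaChi χ p (eps p)) (sigmaChi χ p (eps i)) = _
    rw [hσp, hσi, chi_neg_left hχ, hχ.2.1, chi_nsmul_right hχ]
  have hrip : rp χ p (eps i) (eps p) =
      (χ (eps i) (eps p) * χ (eps p) (eps p) ^ m)⁻¹ := by
    show χ (sigmaChi χ p (eps i)) (sigmaChi χ p (eps p)) = _
    rw [hσp, hσi, chi_neg_right hχ, hχ.1, chi_nsmul_left hχ]
  -- cartan of rp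
  have hcrp : cartan (rp χ p) p i = -(m : ℤ) := by
    refine cartan_eq_of (Ne.symm hip) ?_ ?_
    · rw [hrpp, hrpi, hrip]
      rcases hm with h | h
      · exact Or.inl h
      · refine Or.inr ?_
        have h2 : χ (eps p) (eps p) ^ m * χ (eps p) (eps i) * χ (eps i) (eps p) *
            (χ (eps p) (eps p) ^ m * χ (eps p) (eps i) * χ (eps i) (eps p)) = 1 := by
          rw [h]; norm_num
        field_simp
        linear_combination -h
    · intro k hk hCk
      rw [hrpp, hrpi, hrip] at hCk
      have hnot := hmin k hk
      push_neg at hnot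
      rcases hCk with h | h
      · exact hnot.1 h
      · have h' : χ (eps p) (eps p) ^ k = χ (eps p) (eps i) * χ (eps i) (eps p) *
            χ (eps p) (eps p) ^ m * χ (eps p) (eps p) ^ m := by
          field_simp at h
          linear_combination h
        rcases hm with h1 | h1
        · have E := pow_eq_one_of_qNat h1
          have hnot2 := hmin (m - 1 - k) (by omega)
          push_neg at hnot2
          refine hnot2.2 ?_
          have e3 : χ (eps p) (eps p) ^ k * χ (eps p) (eps p) ^ (m - 1 - k) *
              χ (eps p) (eps p) ^ 2 = χ (eps p) (eps p) ^ (m + 1) := by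
            rw [← pow_add, ← pow_add]
            congr 1
            omega
          linear_combination (-(χ (eps p) (eps p) ^ (m - 1 - k) * χ (eps p) (eps p) ^ 2)) * h'
            + (1 - χ (eps p) (eps i) * χ (eps i) (eps p) * χ (eps p) (eps p) ^ (m - 1 - k) *
              (1 + χ (eps p) (eps p) ^ (m + 1))) * E + e3
        · refine hnot.2 ?_
          linear_combination (χ (eps p) (eps i) * χ (eps i) (eps p)) * h' +
            (χ (eps p) (eps p) ^ m * χ (eps p) (eps i) * χ (eps i) (eps p) + 1) * h1
  have htoNatrp : (-(cartan (rp χ p) p i)).toNat = m := by rw [hcrp]; simp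
  -- cartan of χ⁻¹
  have hcinv : cartan (fun a b => (χ a b)⁻¹) p i = -(m : ℤ) := by
    have hiff : ∀ s : ℕ,
        (qNat (χ (eps p) (eps p))⁻¹ (s + 1) = 0 ∨
          ((χ (eps p) (eps p))⁻¹) ^ s * (χ (eps p) (eps i))⁻¹ * (χ (eps i) (eps p))⁻¹ = 1) ↔
        (qNat (χ (eps p) (eps p)) (s + 1) = 0 ∨
          χ (eps p) (eps p) ^ s * χ (eps p) (eps i) * χ (eps i) (eps p) = 1) := by
      intro s
      have e1 : qNat (χ (eps p) (eps p))⁻¹ (s + 1) = 0 ↔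
          qNat (χ (eps p) (eps p)) (s + 1) = 0 := by
        constructor
        · intro h
          rw [← qNat_inv _ hq0 s, h, zero_mul]
        · intro h
          have := qNat_inv (χ (eps p) (eps p)) hq0 s
          rw [h] at this
          exact (mul_eq_zero.mp this).resolve_right (pow_ne_zero _ hq0)
      have e2 : ((χ (eps p) (eps p))⁻¹) ^ s * (χ (eps p) (eps i))⁻¹ * (χ (eps i) (eps p))⁻¹ =
          (χ (eps p) (eps p) ^ s * χ (eps p) (eps i) * χ (eps i) (eps p))⁻¹ := by
        rw [mul_inv, mul_inv, inv_pow]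
      rw [e1, e2, inv_eq_one]
    exact cartan_eq_of (Ne.symm hip) ((hiff m).mpr hm)
      (fun k hk h => hmin k hk ((hiff k).mp h))
  have htoNatinv : (-(cartan (fun a b => (χ a b)⁻¹) p i)).toNat = m := by rw [hcinv]; simp
  -- unfold the lams
  have hlam : lam χ p i = qFact (χ (eps p) (eps p)) m *
      ∏ s ∈ Finset.range m,
        (χ (eps p) (eps p) ^ s * χ (eps p) (eps i) * χ (eps i) (eps p) - 1) := by
    rw [lam, htoNat]
  have hlamrp : lam (rp χ p) p i = qFact (χ (eps p) (eps p)) m *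
      ∏ s ∈ Finset.range m,
        (χ (eps p) (eps p) ^ s * (χ (eps p) (eps i) * χ (eps p) (eps p) ^ m)⁻¹ *
          (χ (eps i) (eps p) * χ (eps p) (eps p) ^ m)⁻¹ - 1) := by
    rw [lam, htoNatrp, hrpp, hrpi, hrip]
  have hlaminv : lam (fun a b => (χ a b)⁻¹) p i = qFact (χ (eps p) (eps p))⁻¹ m *
      ∏ s ∈ Finset.range m,
        (((χ (eps p) (eps p))⁻¹) ^ s * (χ (eps p) (eps i))⁻¹ * (χ (eps i) (eps p))⁻¹ - 1) := by
    rw [lam, htoNatinv]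
  constructor
  · -- rp part
    rw [hlamrp, hlam, hc]
    have hz : (χ (eps p) (eps p) ^ (-(-(m : ℤ))) * χ (eps p) (eps i) * χ (eps i) (eps p))
        ^ (-(m : ℤ)) =
        ((χ (eps p) (eps p) ^ m * χ (eps p) (eps i) * χ (eps i) (eps p)) ^ m)⁻¹ := by
      rw [neg_neg, zpow_natCast, zpow_neg, zpow_natCast]
    rw [hz]
    rcases hm with h | h
    · exact lam_rp_calc2 _ _ _ hq0 hA0 hB0 m h
        (fun k hk => by have := hmin k hk; push_neg at this; exact this.1)
    · exact lam_rp_calc1 _ _ _ hq0 hA0 hB0 m h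
  · -- inverse part
    rw [hlaminv, hlam, hc]
    have hz : (-(χ (eps p) (eps p) ^ (-(-(m : ℤ)) - 1) * χ (eps p) (eps i) * χ (eps i) (eps p)))
        ^ (-(m : ℤ)) =
        ((-(χ (eps p) (eps p) ^ m * (χ (eps p) (eps p))⁻¹ * χ (eps p) (eps i) *
          χ (eps i) (eps p))) ^ m)⁻¹ := by
      rw [neg_neg, zpow_sub_one₀ hq0, zpow_natCast, zpow_neg, zpow_natCast]
    rw [hz]
    exact lam_inv_calc _ _ _ hq0 hA0 hB0 m
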